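/- Let ℓ₁ denote the real Banach space of absolutely summable sequences x = (x_n) with the norm ‖x‖₁ = Σ|x_n|. Then for all κ, τ > 0, T₂(κ,τ,ℓ₁) = κ + τ. -/

import Mathlib

/-- The skew constant `T₂(κ,τ,X) = sup{ (‖κx + τy‖ ‖τx − κy‖)^{1/2} : x, y ∈ S(X) }`. -/
noncomputable def T2 (X : Type*) [NormedAddCommGroup X] [Module ℝ X] (κ τ : ℝ) : ℝ :=
  sSup {r : ℝ | ∃ x y : X, ‖x‖ = 1 ∧ ‖y‖ = 1 ∧
    r = Real.sqrt (‖κ • x + τ • y‖ * ‖τ • x - κ • y‖)}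

lemma norm_two_single (a b : ℝ) :
    ‖(lp.single 1 0 a + lp.single 1 1 b : lp (fun _ : ℕ => ℝ) 1)‖ = |a| + |b| := by
  have hp : (0:ℝ) < (1 : ENNReal).toReal := by norm_num
  set f : ℕ → ℝ := fun i => if i = 0 then a else b with hf
  have hsum : (∑ i ∈ ({0, 1} : Finset ℕ), lp.single 1 i (f i) : lp (fun _ : ℕ => ℝ) 1)
      = lp.single 1 0 a + lp.single 1 1 b := by
    rw [Finset.sum_pair (by norm_num)]
    simp [hf]
  have := lp.norm_sum_single (E := fun _ : ℕ => ℝ) hp f ({0, 1} : Finset ℕ)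
  rw [hsum] at this
  simp only [ENNReal.toReal_one, Real.rpow_one] at this
  rw [this, Finset.sum_pair (by norm_num)]
  simp [hf, Real.norm_eq_abs]

lemma norm_single_one : ‖(lp.single 1 0 (1:ℝ) : lp (fun _ : ℕ => ℝ) 1)‖ = 1 := by
  have hp : (0:ℝ) < (1 : ENNReal).toReal := by norm_num
  have := lp.norm_single (E := fun _ : ℕ => ℝ) (p := 1) (by norm_num) 0 (1:ℝ)
  simpa using this

lemma norm_single_one' : ‖(lp.single 1 1 (1:ℝ) : lp (fun _ : ℕ => ℝ) 1)‖ = 1 := by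
  have hp : (0:ℝ) < (1 : ENNReal).toReal := by norm_num
  have := lp.norm_single (E := fun _ : ℕ => ℝ) (p := 1) (by norm_num) 1 (1:ℝ)
  simpa using this

/-- For the space `ℓ₁` of absolutely summable real sequences and all
`κ, τ > 0`, `T₂(κ,τ,ℓ₁) = κ + τ`. -/
theorem stmt11 (κ τ : ℝ) (hκ : 0 < κ) (hτ : 0 < τ) :
    T2 (lp (fun _ : ℕ => ℝ) 1) κ τ = κ + τ := by
  set X := lp (fun _ : ℕ => ℝ) 1
  have hκτ : (0:ℝ) ≤ κ + τ := by positivity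
  set S := {r : ℝ | ∃ x y : X, ‖x‖ = 1 ∧ ‖y‖ = 1 ∧
    r = Real.sqrt (‖κ • x + τ • y‖ * ‖τ • x - κ • y‖)} with hS
  have hub : ∀ r ∈ S, r ≤ κ + τ := by
    rintro r ⟨x, y, hx, hy, rfl⟩
    have h1 : ‖κ • x + τ • y‖ ≤ κ + τ := by
      calc ‖κ • x + τ • y‖ ≤ ‖κ • x‖ + ‖τ • y‖ := norm_add_le _ _
        _ = κ + τ := by
          rw [norm_smul, norm_smul, hx, hy, Real.norm_eq_abs, Real.norm_eq_abs,
            abs_of_pos hκ, abs_of_pos hτ]; ring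
    have h2 : ‖τ • x - κ • y‖ ≤ κ + τ := by
      calc ‖τ • x - κ • y‖ ≤ ‖τ • x‖ + ‖κ • y‖ := norm_sub_le _ _
        _ = κ + τ := by
          rw [norm_smul, norm_smul, hx, hy, Real.norm_eq_abs, Real.norm_eq_abs,
            abs_of_pos hκ, abs_of_pos hτ]; ring
    calc Real.sqrt (‖κ • x + τ • y‖ * ‖τ • x - κ • y‖)
        ≤ Real.sqrt ((κ + τ) * (κ + τ)) := by
          apply Real.sqrt_le_sqrt
          exact mul_le_mul h1 h2 (norm_nonneg _) hκτ
      _ = κ + τ := by rw [Real.sqrt_mul_self hκτ]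
  have hmem : κ + τ ∈ S := by
    refine ⟨lp.single 1 0 (1:ℝ), lp.single 1 1 (1:ℝ), norm_single_one, norm_single_one', ?_⟩
    have e1 : (κ • lp.single 1 0 (1:ℝ) + τ • lp.single 1 1 (1:ℝ) : X)
        = lp.single 1 0 κ + lp.single 1 1 τ := by
      rw [← lp.single_smul, ← lp.single_smul]; norm_num
    have e2 : (τ • lp.single 1 0 (1:ℝ) - κ • lp.single 1 1 (1:ℝ) : X)
        = lp.single 1 0 τ + lp.single 1 1 (-κ) := by
      rw [← lp.single_smul, ← lp.single_smul]
      simp [sub_eq_add_neg]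
    rw [e1, e2, norm_two_single, norm_two_single, abs_of_pos hκ, abs_of_pos hτ, abs_neg,
      abs_of_pos hκ]
    rw [show (κ + τ) * (τ + κ) = (κ + τ) * (κ + τ) by ring, Real.sqrt_mul_self hκτ]
  have hbdd : BddAbove S := ⟨κ + τ, hub⟩
  exact le_antisymm (csSup_le ⟨_, hmem⟩ hub) (le_csSup hbdd hmem)
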